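/- Let m be a Borel measure on ℝⁿ, finite on compact sets, satisfying ∫ e^{−β|x|} dm(x) < +∞ for some β > 0. For any φ ∈ F(ℝⁿ), it holds that log ∫ e^{−φ} dm = sup_{ν ∈ P₁(ℝⁿ)} {∫ (−φ) dν − H(ν|m)}, and the supremum can be restricted to compactly supported ν. Moreover, if φ and m are symmetric (resp. unconditional), the supremum can be restricted to compactly supported symmetric (resp. unconditional) elements of P₁(ℝⁿ). -/

import Mathlib

open MeasureTheory Real Filter Set
attribute [local instance] Classical.propDecidable
open scoped ENNReal NNReal Topology

noncomputable section

/-- `ℝⁿ` as a Euclidean space. -/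
abbrev En (n : ℕ) : Type := EuclideanSpace ℝ (Fin n)

/-- `exp(-t)` for an extended real `t`, valued in `ℝ≥0∞`. -/
def expNeg (t : EReal) : ℝ≥0∞ :=
  if t = ⊥ then ⊤ else if t = ⊤ then 0 else ENNReal.ofReal (Real.exp (-t.toReal))

/-- Convexity for `EReal`-valued functions on `ℝⁿ`. -/
def ConvexE {n : ℕ} (f : En n → EReal) : Prop :=
  ∀ x y : En n, ∀ t : ℝ, 0 ≤ t → t ≤ 1 →
    f (t • x + (1 - t) • y) ≤ (t : EReal) * f x + ((1 - t : ℝ) : EReal) * f y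

/-- The class `F(ℝⁿ)`: proper lower semicontinuous convex functions `ℝⁿ → ℝ ∪ {+∞}`. -/
def IsF {n : ℕ} (f : En n → EReal) : Prop :=
  LowerSemicontinuous f ∧ ConvexE f ∧ (∃ x, f x ≠ ⊤) ∧ (∀ x, f x ≠ ⊥)

/-- Fenchel–Legendre transform. -/
def legendre {n : ℕ} (f : En n → EReal) : En n → EReal :=
  fun y => ⨆ x : En n, ((inner ℝ x y : ℝ) : EReal) - f x

/-- `∫ e^{-f} dm`, valued in `ℝ≥0∞`. -/
def intExpNeg {n : ℕ} (m : Measure (En n)) (f : En n → EReal) : ℝ≥0∞ :=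
  ∫⁻ x, expNeg (f x) ∂m

/-- Extended-real logarithm of an `ℝ≥0∞` number. -/
def elog (x : ℝ≥0∞) : EReal :=
  if x = 0 then ⊥ else if x = ⊤ then ⊤ else ((Real.log x.toReal : ℝ) : EReal)

/-- Positive part of an extended real, as an element of `ℝ≥0∞`. -/
def posPart (x : EReal) : ℝ≥0∞ := if x = ⊤ then ⊤ else ENNReal.ofReal x.toReal

/-- Extended-valued integral `∫ f dμ := ∫ f⁺ dμ - ∫ f⁻ dμ`. -/
def eInt {n : ℕ} (μ : Measure (En n)) (f : En n → EReal) : EReal :=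
  ((∫⁻ x, posPart (f x) ∂μ : ℝ≥0∞) : EReal) - ((∫⁻ x, posPart (-f x) ∂μ : ℝ≥0∞) : EReal)

/-- Probability measures with finite first moment. -/
def MemP1 {n : ℕ} (ν : Measure (En n)) : Prop :=
  IsProbabilityMeasure ν ∧ ∫⁻ x, (‖x‖₊ : ℝ≥0∞) ∂ν ≠ ⊤

/-- Probability measures with finite second moment. -/
def MemP2 {n : ℕ} (ν : Measure (En n)) : Prop :=
  IsProbabilityMeasure ν ∧ ∫⁻ x, (‖x‖₊ : ℝ≥0∞) ^ 2 ∂ν ≠ ⊤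

/-- A measure is compactly supported. -/
def HasCompactSupportMeasure {n : ℕ} (ν : Measure (En n)) : Prop :=
  ∃ K : Set (En n), IsCompact K ∧ ν Kᶜ = 0

/-- Coordinate sign flip of a point of `ℝⁿ`. -/
def signFlip {n : ℕ} (ε : Fin n → Bool) (x : En n) : En n :=
  (EuclideanSpace.equiv (Fin n) ℝ).symm (fun i => if ε i then x i else -x i)

/-- Unconditional function. -/
def UncondFun {n : ℕ} (f : En n → EReal) : Prop := ∀ ε x, f (signFlip ε x) = f x

/-- Symmetric function. -/
def SymmFun {n : ℕ} (f : En n → EReal) : Prop := ∀ x, f (-x) = f x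

/-- Unconditional measure. -/
def UncondMeas {n : ℕ} (ν : Measure (En n)) : Prop := ∀ ε, Measure.map (signFlip ε) ν = ν

/-- Symmetric measure. -/
def SymmMeas {n : ℕ} (ν : Measure (En n)) : Prop := Measure.map (fun x => -x) ν = ν

/-- The functional `K(ν|m) = sup { ∫(-f) dν + log ∫ e^{-f*} dm : f ∈ L¹(ν) ∩ F(ℝⁿ) }`. -/
def Kfun {n : ℕ} (ν m : Measure (En n)) : EReal :=
  ⨆ (f : En n → EReal) (_ : IsF f ∧ (∀ᵐ x ∂ν, f x ≠ ⊤) ∧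
      Integrable (fun x => (f x).toReal) ν),
    ((-(∫ x, (f x).toReal ∂ν) : ℝ) : EReal) + elog (intExpNeg m (legendre f))

/-- Maximal correlation transport cost `T(ν₁, ν₂)`. -/
def Tcost {n : ℕ} (ν₁ ν₂ : Measure (En n)) : EReal :=
  ⨅ (f : En n → EReal) (_ : IsF f), eInt ν₁ f + eInt ν₂ (legendre f)

/-- Relative entropy `H(η|m)`, equal to `+∞` when `η` is not absolutely continuous w.r.t. `m`. -/
def relEnt {n : ℕ} (η m : Measure (En n)) : EReal :=
  if η ≪ m then eInt η (fun x => ((Real.log (η.rnDeriv m x).toReal : ℝ) : EReal)) else ⊤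

/-- The standard Gaussian measure on `ℝⁿ`. -/
def stdGaussian (n : ℕ) : Measure (En n) :=
  volume.withDensity fun x =>
    ENNReal.ofReal ((2 * Real.pi) ^ (-(n : ℝ) / 2) * Real.exp (-‖x‖ ^ 2 / 2))

/-- Squared `2`-Wasserstein distance. -/
def W2sq {n : ℕ} (μ ν : Measure (En n)) : ℝ≥0∞ :=
  ⨅ (p : Measure (En n × En n)) (_ : p.map Prod.fst = μ ∧ p.map Prod.snd = ν),
    ∫⁻ q, (‖q.1 - q.2‖₊ : ℝ≥0∞) ^ 2 ∂p

/-- Absolute continuity of `g : ℝ → ℝ` on `[a, b]` (FTC characterization). -/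
def ACOn (g : ℝ → ℝ) (a b : ℝ) : Prop :=
  IntegrableOn (deriv g) (Set.Icc a b) ∧
    ∀ x ∈ Set.Icc a b, g x - g a = ∫ t in a..x, deriv g t

/-- The point of `ℝⁿ` obtained by replacing the `i`-th coordinate of `x` by `t`. -/
def updCoord {n : ℕ} (x : En n) (i : Fin n) (t : ℝ) : En n :=
  (EuclideanSpace.equiv (Fin n) ℝ).symm
    (Function.update ((EuclideanSpace.equiv (Fin n) ℝ) x) i t)

/-- Absolute continuity on almost every line parallel to a coordinate axis. -/
def ACL {n : ℕ} (g : En n → ℝ) : Prop :=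
  ∀ i : Fin n, ∀ᵐ x ∂(volume : Measure (En n)),
    ∀ a b : ℝ, ACOn (fun t => g (updCoord x i t)) a b

/-- Squared norm of the coordinate-wise a.e. gradient, via line derivatives. -/
def gradSq {n : ℕ} (g : En n → ℝ) (x : En n) : ℝ :=
  ∑ i : Fin n, (lineDeriv ℝ g x (EuclideanSpace.single i 1)) ^ 2

/-- Relative Fisher information `I(η|γ) = 4 ∫ |∇ √h|² dγ` where `h = dη/dγ`;
`+∞` unless `√h` is absolutely continuous on almost every line parallel to an axis. -/
def fisherInfo {n : ℕ} (η γ : Measure (En n)) : ℝ≥0∞ :=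
  if η ≪ γ ∧ ACL (fun x => Real.sqrt (η.rnDeriv γ x).toReal) then
    4 * ∫⁻ x, ENNReal.ofReal (gradSq (fun y => Real.sqrt (η.rnDeriv γ y).toReal) x) ∂γ
  else ⊤

/-- Deficit in the Gaussian logarithmic Sobolev inequality. -/
def lsDeficit {n : ℕ} (η : Measure (En n)) : EReal :=
  ((1 / 2 : ℝ) : EReal) * ((fisherInfo η (stdGaussian n) : ℝ≥0∞) : EReal)
    - relEnt η (stdGaussian n)

/-- Moment measure `∇V_# η` of a log-concave measure `η = e^{-V} dx`. -/
def momentMeasure {n : ℕ} (V : En n → EReal) (η : Measure (En n)) : Measure (En n) :=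
  Measure.map (fun x => gradient (fun y => (V y).toReal) x) η

/-- Essential continuity of a convex function. -/
def EssCont {n : ℕ} (V : En n → EReal) : Prop :=
  μH[(n : ℝ) - 1] {x : En n | x ∈ frontier {y | V y ≠ ⊤} ∧ V x ≠ ⊤} = 0

/-- The functional inverse Santaló inequality with constant `c`, restricted to a class `P`. -/
def InvSantaloOn {n : ℕ} (c : ℝ) (P : (En n → EReal) → Prop) : Prop :=
  ∀ f : En n → EReal, IsF f → P f →
    0 < intExpNeg volume f → 0 < intExpNeg volume (legendre f) →
    ENNReal.ofReal c ^ n ≤ intExpNeg volume f * intExpNeg volume (legendre f)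

/-- The functional inverse Santaló inequality `IS_n(c)`. -/
def InvSantalo (n : ℕ) (c : ℝ) : Prop := InvSantaloOn (n := n) c fun _ => True

/-- The symmetric functional inverse Santaló inequality `IS_{n,s}(c)`. -/
def InvSantaloSymm (n : ℕ) (c : ℝ) : Prop := InvSantaloOn (n := n) c SymmFun

/-- The unconditional functional inverse Santaló inequality `IS_{n,u}(c)`. -/
def InvSantaloUncond (n : ℕ) (c : ℝ) : Prop := InvSantaloOn (n := n) c UncondFun

section Helpers

lemma ePosPartEq (x : EReal) :
    _root_.posPart x = if x = ⊤ then ⊤ else ENNReal.ofReal x.toReal := rfl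

lemma posPart_coe' (r : ℝ) : _root_.posPart (r : EReal) = ENNReal.ofReal r := by
  rw [ePosPartEq]
  rw [if_neg (EReal.coe_ne_top r), EReal.toReal_coe]

lemma posPart_neg_coe' (r : ℝ) : _root_.posPart (-(r : EReal)) = ENNReal.ofReal (-r) := by
  rw [← EReal.coe_neg, posPart_coe']

lemma posPart_top' : _root_.posPart (⊤ : EReal) = ⊤ := by rw [ePosPartEq, if_pos rfl]

lemma posPart_bot' : _root_.posPart (⊥ : EReal) = 0 := by
  rw [ePosPartEq]
  rw [if_neg (by simp : (⊥ : EReal) ≠ ⊤), EReal.toReal_bot, ENNReal.ofReal_zero]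

lemma monotone_posPart' : Monotone (posPart : EReal → ℝ≥0∞) := by
  intro x y hxy
  by_cases hy : y = ⊤
  · simp [hy, posPart_top']
  · have hx : x ≠ ⊤ := fun h => hy (top_le_iff.mp (h ▸ hxy))
    rw [ePosPartEq, ePosPartEq, if_neg hx, if_neg hy]
    by_cases hxb : x = ⊥
    · simp [hxb]
    · exact ENNReal.ofReal_le_ofReal (EReal.toReal_le_toReal hxy hxb hy)

lemma measurable_posPart' : Measurable (posPart : EReal → ℝ≥0∞) :=
  monotone_posPart'.measurable

lemma monotone_elog : Monotone elog := by
  intro x y hxy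
  by_cases hx : x = 0
  · simp [hx, elog]
  by_cases hxt : x = ⊤
  · have : y = ⊤ := top_le_iff.mp (hxt ▸ hxy)
    simp [this, hxt]
  by_cases hyt : y = ⊤
  · simp [elog, hyt]
  have hy : y ≠ 0 := fun h => hx (le_antisymm (h ▸ hxy) (zero_le))
  rw [elog, if_neg hx, if_neg hxt, elog, if_neg hy, if_neg hyt]
  exact_mod_cast Real.log_le_log (ENNReal.toReal_pos hx hxt)
    (ENNReal.toReal_le_toReal hxt hyt |>.mpr hxy)

lemma measurable_elog : Measurable elog := monotone_elog.measurable

lemma antitone_expNeg : Antitone expNeg := by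
  intro x y hxy
  by_cases hx : x = ⊥
  · simp [hx, expNeg]
  by_cases hyt : y = ⊤
  · simp [expNeg, hyt]
  have hyb : y ≠ ⊥ := fun h => hx (le_bot_iff.mp (h ▸ hxy))
  have hxt : x ≠ ⊤ := fun h => hyt (top_le_iff.mp (h ▸ hxy))
  simp only [expNeg]
  rw [if_neg hx, if_neg hxt, if_neg hyb, if_neg hyt]
  exact ENNReal.ofReal_le_ofReal (Real.exp_le_exp.mpr
    (neg_le_neg (EReal.toReal_le_toReal hxy hx hyt)))

lemma measurable_expNeg : Measurable expNeg := antitone_expNeg.measurable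

lemma expNeg_coe (r : ℝ) : expNeg (r : EReal) = ENNReal.ofReal (Real.exp (-r)) := by
  rw [expNeg, if_neg (EReal.coe_ne_bot r), if_neg (EReal.coe_ne_top r), EReal.toReal_coe]

lemma expNeg_top : expNeg ⊤ = 0 := by simp [expNeg]

lemma expNeg_ne_top {t : EReal} (ht : t ≠ ⊥) : expNeg t ≠ ⊤ := by
  rw [expNeg, if_neg ht]
  split <;> simp

lemma elog_ofReal_exp (r : ℝ) : elog (ENNReal.ofReal (Real.exp r)) = (r : EReal) := by
  rw [elog, if_neg (by positivity), if_neg ENNReal.ofReal_ne_top,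
    ENNReal.toReal_ofReal (Real.exp_pos r).le, Real.log_exp]

end Helpers
section Helpers2

variable {n : ℕ}

lemma eInt_congr_ae {μ : Measure (En n)} {f g : En n → EReal}
    (h : ∀ᵐ x ∂μ, f x = g x) : eInt μ f = eInt μ g := by
  have A : (∫⁻ x, _root_.posPart (f x) ∂μ) = ∫⁻ x, _root_.posPart (g x) ∂μ :=
    lintegral_congr_ae (h.mono fun x hx => by simp only [hx])
  have B : (∫⁻ x, _root_.posPart (-f x) ∂μ) = ∫⁻ x, _root_.posPart (-g x) ∂μ :=
    lintegral_congr_ae (h.mono fun x hx => by simp only [hx])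
  rw [eInt, eInt, A, B]

lemma eInt_mono_ae {μ : Measure (En n)} {f g : En n → EReal}
    (h : ∀ᵐ x ∂μ, f x ≤ g x) : eInt μ f ≤ eInt μ g := by
  refine EReal.sub_le_sub ?_ ?_
  · exact EReal.coe_ennreal_le_coe_ennreal_iff.mpr <|
      lintegral_mono_ae (h.mono fun x hx => monotone_posPart' hx)
  · exact EReal.coe_ennreal_le_coe_ennreal_iff.mpr <|
      lintegral_mono_ae (h.mono fun x hx => monotone_posPart' (EReal.neg_le_neg_iff.mpr hx))

lemma eInt_coe {μ : Measure (En n)} {g : En n → ℝ} (hg : Integrable g μ) :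
    eInt μ (fun x => ((g x : ℝ) : EReal)) = ((∫ x, g x ∂μ : ℝ) : EReal) := by
  have h1 : ∀ x, _root_.posPart ((g x : ℝ) : EReal) = ENNReal.ofReal (max (g x) 0) := by
    intro x
    rw [posPart_coe']
    rcases le_total (g x) 0 with h | h
    · rw [ENNReal.ofReal_eq_zero.mpr h, eq_comm, ENNReal.ofReal_eq_zero.mpr (by simp [h])]
    · rw [max_eq_left h]
  have h2 : ∀ x, _root_.posPart (-((g x : ℝ) : EReal)) = ENNReal.ofReal (max (-g x) 0) := by
    intro x
    rw [posPart_neg_coe']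
    rcases le_total (-g x) 0 with h | h
    · rw [ENNReal.ofReal_eq_zero.mpr h, eq_comm, ENNReal.ofReal_eq_zero.mpr (by simp [h])]
    · rw [max_eq_left h]
  have e1 : (∫⁻ x, _root_.posPart ((g x : ℝ) : EReal) ∂μ)
      = ENNReal.ofReal (∫ x, max (g x) 0 ∂μ) := by
    rw [lintegral_congr fun x => h1 x,
      ← ofReal_integral_eq_lintegral_ofReal hg.pos_part
        (Eventually.of_forall fun x => le_max_right _ _)]
  have e2 : (∫⁻ x, _root_.posPart (-((g x : ℝ) : EReal)) ∂μ)
      = ENNReal.ofReal (∫ x, max (-g x) 0 ∂μ) := by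
    rw [lintegral_congr fun x => h2 x,
      ← ofReal_integral_eq_lintegral_ofReal
        (show Integrable (fun x => max (-g x) 0) μ from hg.neg.pos_part)
        (Eventually.of_forall fun x => le_max_right _ _)]
  have c1 : ((ENNReal.ofReal (∫ x, max (g x) 0 ∂μ) : ℝ≥0∞) : EReal)
      = ((∫ x, max (g x) 0 ∂μ : ℝ) : EReal) := by
    rw [EReal.coe_ennreal_ofReal, max_eq_left (integral_nonneg fun x => le_max_right (g x) 0)]
  have c2 : ((ENNReal.ofReal (∫ x, max (-g x) 0 ∂μ) : ℝ≥0∞) : EReal)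
      = ((∫ x, max (-g x) 0 ∂μ : ℝ) : EReal) := by
    rw [EReal.coe_ennreal_ofReal, max_eq_left (integral_nonneg fun x => le_max_right (-g x) 0)]
  rw [eInt, e1, e2, c1, c2, ← EReal.coe_sub, ← integral_sub hg.pos_part
    (show Integrable (fun x => max (-g x) 0) μ from hg.neg.pos_part),
    integral_congr_ae (Eventually.of_forall fun x =>
      max_zero_sub_max_neg_zero_eq_self (g x))]

end Helpers2
section Helpers3

variable {n : ℕ}

lemma ennE {x : ℝ≥0∞} (hx : x ≠ ⊤) : (x : EReal) = ((x.toReal : ℝ) : EReal) := by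
  rw [← EReal.toReal_coe_ennreal (x := x), EReal.coe_toReal]
  · exact fun h => hx (EReal.coe_ennreal_eq_top_iff.mp h)
  · exact EReal.coe_ennreal_ne_bot x

lemma ofReal_max0 (u : ℝ) : ENNReal.ofReal (max u 0) = ENNReal.ofReal u := by
  rcases le_total u 0 with h | h
  · rw [max_eq_right h, ENNReal.ofReal_zero, eq_comm, ENNReal.ofReal_eq_zero.mpr h]
  · rw [max_eq_left h]

lemma lintegral_ofReal_eq {μ : Measure (En n)} {g : En n → ℝ} (hg : Integrable g μ) :
    (∫⁻ x, ENNReal.ofReal (g x) ∂μ) = ENNReal.ofReal (∫ x, max (g x) 0 ∂μ) := by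
  rw [← lintegral_congr fun x => ofReal_max0 (g x),
    ← ofReal_integral_eq_lintegral_ofReal hg.pos_part
      (Eventually.of_forall fun x => le_max_right _ _)]

lemma integral_eq_sub_max {μ : Measure (En n)} {g : En n → ℝ} (hg : Integrable g μ) :
    (∫ x, g x ∂μ) = (∫ x, max (g x) 0 ∂μ) - ∫ x, max (-g x) 0 ∂μ := by
  rw [← integral_sub hg.pos_part
    (show Integrable (fun x => max (-g x) 0) μ from hg.neg.pos_part),
    integral_congr_ae (Eventually.of_forall fun x =>
      (max_zero_sub_max_neg_zero_eq_self (g x)).symm)]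

lemma eInt_coe_sub_le {μ : Measure (En n)} {A B : En n → ℝ}
    (hA : Measurable A) (hBm : Measurable B) (hB : Integrable B μ)
    (hAneg : (∫⁻ x, ENNReal.ofReal (-(A x)) ∂μ) ≠ ⊤) :
    eInt μ (fun x => ((A x : ℝ) : EReal)) ≤
      eInt μ (fun x => ((A x - B x : ℝ) : EReal)) + ((∫ x, B x ∂μ : ℝ) : EReal) := by
  set ap := ∫⁻ x, ENNReal.ofReal (A x) ∂μ with hap
  set an := ∫⁻ x, ENNReal.ofReal (-(A x)) ∂μ with han
  set cp := ∫⁻ x, ENNReal.ofReal (A x - B x) ∂μ with hcp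
  set cn := ∫⁻ x, ENNReal.ofReal (B x - A x) ∂μ with hcn
  set bp := ∫⁻ x, ENNReal.ofReal (B x) ∂μ with hbp
  set bn := ∫⁻ x, ENNReal.ofReal (-(B x)) ∂μ with hbn
  have hbpt : bp ≠ ⊤ := by
    rw [hbp, lintegral_ofReal_eq hB]; exact ENNReal.ofReal_ne_top
  have hbnt : bn ≠ ⊤ := by
    rw [hbn, lintegral_ofReal_eq (show Integrable (fun x => -(B x)) μ from hB.neg)]
    exact ENNReal.ofReal_ne_top
  have eA : eInt μ (fun x => ((A x : ℝ) : EReal)) = ((ap : EReal) - (an : EReal)) := by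
    rw [eInt, lintegral_congr fun x => posPart_coe' (A x),
      lintegral_congr fun x => posPart_neg_coe' (A x)]
  have eC : eInt μ (fun x => ((A x - B x : ℝ) : EReal)) = ((cp : EReal) - (cn : EReal)) := by
    rw [eInt, lintegral_congr fun x => posPart_coe' (A x - B x),
      lintegral_congr fun x => posPart_neg_coe' (A x - B x),
      lintegral_congr fun x => (by rw [neg_sub] :
        ENNReal.ofReal (-(A x - B x)) = ENNReal.ofReal (B x - A x))]
  have measofA : Measurable fun x => ENNReal.ofReal (A x) :=
    ENNReal.measurable_ofReal.comp hA
  have measofBA : Measurable fun x => ENNReal.ofReal (B x - A x) :=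
    ENNReal.measurable_ofReal.comp (hBm.sub hA)
  have measofAB : Measurable fun x => ENNReal.ofReal (A x - B x) :=
    ENNReal.measurable_ofReal.comp (hA.sub hBm)
  have measofB : Measurable fun x => ENNReal.ofReal (B x) :=
    ENNReal.measurable_ofReal.comp hBm
  have measofnB : Measurable fun x => ENNReal.ofReal (-(B x)) :=
    ENNReal.measurable_ofReal.comp hBm.neg
  have measofnA : Measurable fun x => ENNReal.ofReal (-(A x)) :=
    ENNReal.measurable_ofReal.comp hA.neg
  have key : ap + cn + bn = cp + bp + an := by
    have ptw : ∀ x,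
        ENNReal.ofReal (A x) + ENNReal.ofReal (B x - A x) + ENNReal.ofReal (-(B x))
        = ENNReal.ofReal (A x - B x) + ENNReal.ofReal (B x) + ENNReal.ofReal (-(A x)) := by
      intro x
      rw [← ofReal_max0 (A x), ← ofReal_max0 (B x - A x), ← ofReal_max0 (-(B x)),
        ← ofReal_max0 (A x - B x), ← ofReal_max0 (B x), ← ofReal_max0 (-(A x)),
        ← ENNReal.ofReal_add (le_max_right _ _) (le_max_right _ _),
        ← ENNReal.ofReal_add (by positivity) (le_max_right _ _),
        ← ENNReal.ofReal_add (le_max_right _ _) (le_max_right _ _),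
        ← ENNReal.ofReal_add (by positivity) (le_max_right _ _)]
      congr 1
      simp only [max_def]
      split_ifs <;> linarith
    calc ap + cn + bn
        = ∫⁻ x, (ENNReal.ofReal (A x) + ENNReal.ofReal (B x - A x)
            + ENNReal.ofReal (-(B x))) ∂μ := by
          rw [lintegral_add_left (f := fun x => ENNReal.ofReal (A x) + ENNReal.ofReal (B x - A x))
              (by exact measofA.add measofBA), lintegral_add_left measofA]
      _ = ∫⁻ x, (ENNReal.ofReal (A x - B x) + ENNReal.ofReal (B x)
            + ENNReal.ofReal (-(A x))) ∂μ := lintegral_congr ptw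
      _ = cp + bp + an := by
          rw [lintegral_add_left (f := fun x => ENNReal.ofReal (A x - B x) + ENNReal.ofReal (B x))
              (by exact measofAB.add measofB), lintegral_add_left measofAB]
  by_cases hcpt : cp = ⊤
  · have hcnt : cn ≠ ⊤ := by
      have ptle : ∀ x, ENNReal.ofReal (B x - A x)
          ≤ ENNReal.ofReal (-(A x)) + ENNReal.ofReal (B x) := by
        intro x
        rw [← ofReal_max0 (-(A x)), ← ofReal_max0 (B x),
          ← ENNReal.ofReal_add (le_max_right _ _) (le_max_right _ _)]
        exact ENNReal.ofReal_le_ofReal (by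
          have := le_max_left (-(A x)) 0
          have := le_max_left (B x) 0
          linarith)
      have : cn ≤ an + bp := by
        rw [hcn, han, hbp, ← lintegral_add_left measofnA]
        exact lintegral_mono ptle
      exact fun h => (ENNReal.add_ne_top.mpr ⟨hAneg, hbpt⟩) (top_le_iff.mp (h ▸ this))
    rw [eC, hcpt, ennE hcnt, EReal.coe_ennreal_top, EReal.top_sub_coe, EReal.top_add_coe]
    exact le_top
  · have hsum : cp + bp + an ≠ ⊤ :=
      ENNReal.add_ne_top.mpr ⟨ENNReal.add_ne_top.mpr ⟨hcpt, hbpt⟩, hAneg⟩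
    have hkey3 : ap + cn + bn ≠ ⊤ := by rw [key]; exact hsum
    have hapt : ap ≠ ⊤ := (ENNReal.add_ne_top.mp ((ENNReal.add_ne_top.mp hkey3).1)).1
    have hcnt : cn ≠ ⊤ := (ENNReal.add_ne_top.mp ((ENNReal.add_ne_top.mp hkey3).1)).2
    have keyR : ap.toReal + cn.toReal + bn.toReal = cp.toReal + bp.toReal + an.toReal := by
      have := congrArg ENNReal.toReal key
      rwa [ENNReal.toReal_add (ENNReal.add_ne_top.mpr ⟨hapt, hcnt⟩) hbnt,
        ENNReal.toReal_add hapt hcnt,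
        ENNReal.toReal_add (ENNReal.add_ne_top.mpr ⟨hcpt, hbpt⟩) hAneg,
        ENNReal.toReal_add hcpt hbpt] at this
    have hBint : (∫ x, B x ∂μ) = bp.toReal - bn.toReal := by
      rw [hbp, lintegral_ofReal_eq hB, hbn,
        lintegral_ofReal_eq (show Integrable (fun x => -(B x)) μ from hB.neg),
        ENNReal.toReal_ofReal (integral_nonneg fun x => le_max_right (B x) 0),
        ENNReal.toReal_ofReal (integral_nonneg fun x => le_max_right (-B x) 0)]
      exact integral_eq_sub_max hB
    rw [eA, eC, ennE hapt, ennE hAneg, ennE hcpt, ennE hcnt, ← EReal.coe_sub,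
      ← EReal.coe_sub, ← EReal.coe_add, EReal.coe_le_coe_iff, hBint]
    linarith


end Helpers3
section Helpers4

variable {n : ℕ}

lemma eInt_bot {μ : Measure (En n)} [IsProbabilityMeasure μ] :
    eInt μ (fun _ => (⊥ : EReal)) = ⊥ := by
  rw [eInt]
  have h1 : (∫⁻ _, _root_.posPart (⊥ : EReal) ∂μ) = 0 := by
    rw [lintegral_congr fun x => posPart_bot', lintegral_zero]
  have h2 : (∫⁻ _, _root_.posPart (-(⊥ : EReal)) ∂μ) = ⊤ := by
    rw [lintegral_congr fun x =>
      (by rw [EReal.neg_bot, posPart_top'] : _root_.posPart (-(⊥ : EReal)) = ⊤),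
      lintegral_const, measure_univ, mul_one]
  rw [h1, h2, EReal.coe_ennreal_zero, EReal.coe_ennreal_top, EReal.sub_top]

lemma elog_top : elog ⊤ = ⊤ := by
  rw [elog, if_neg (by simp), if_pos rfl]

lemma jensen_elog {ν : Measure (En n)} [IsProbabilityMeasure ν] {w : En n → ℝ≥0∞}
    (hw : Measurable w) :
    eInt ν (fun x => elog (w x)) ≤ elog (∫⁻ x, w x ∂ν) := by
  set I := ∫⁻ x, w x ∂ν with hI
  by_cases hI0 : I = 0
  · have hw0 : ∀ᵐ x ∂ν, w x = 0 := (lintegral_eq_zero_iff hw).mp hI0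
    have : eInt ν (fun x => elog (w x)) = eInt ν (fun _ => (⊥ : EReal)) :=
      eInt_congr_ae (hw0.mono fun x hx => by rw [hx, elog, if_pos rfl])
    rw [this, eInt_bot]
    exact bot_le
  by_cases hIt : I = ⊤
  · rw [hIt, elog_top]
    exact le_top
  have hItR : 0 < I.toReal := ENNReal.toReal_pos hI0 hIt
  set c := Real.log I.toReal with hc
  have hwlt : ∀ᵐ x ∂ν, w x < ⊤ := ae_lt_top hw hIt
  set G : En n → ℝ := fun x => (w x).toReal * I.toReal⁻¹ + (c - 1) with hG
  have hGint : Integrable G ν := by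
    exact ((integrable_toReal_of_lintegral_ne_top hw.aemeasurable hIt).mul_const
      I.toReal⁻¹).add (integrable_const _)
  have hptw : ∀ᵐ x ∂ν, elog (w x) ≤ ((G x : ℝ) : EReal) := by
    filter_upwards [hwlt] with x hx
    by_cases hx0 : w x = 0
    · rw [hx0, elog, if_pos rfl]; exact bot_le
    · rw [elog, if_neg hx0, if_neg hx.ne]
      have hy : 0 < (w x).toReal := ENNReal.toReal_pos hx0 hx.ne
      have : Real.log (w x).toReal ≤ G x := by
        have h1 : Real.log ((w x).toReal / I.toReal) ≤ (w x).toReal / I.toReal - 1 :=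
          Real.log_le_sub_one_of_pos (by positivity)
        rw [Real.log_div hy.ne' hItR.ne'] at h1
        rw [hG]
        simp only []
        rw [div_eq_mul_inv] at h1
        linarith
      exact_mod_cast this
  calc eInt ν (fun x => elog (w x)) ≤ eInt ν (fun x => ((G x : ℝ) : EReal)) :=
        eInt_mono_ae hptw
    _ = ((∫ x, G x ∂ν : ℝ) : EReal) := eInt_coe hGint
    _ ≤ (c : EReal) := by
        have : (∫ x, G x ∂ν) = c := by
          rw [hG]
          rw [integral_add ((integrable_toReal_of_lintegral_ne_top hw.aemeasurable
            hIt).mul_const I.toReal⁻¹) (integrable_const _), integral_mul_const,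
            integral_toReal hw.aemeasurable hwlt, integral_const, probReal_univ,
            one_smul, mul_inv_cancel₀ hItR.ne']
          ring
        rw [this]
    _ = elog I := by rw [elog, if_neg hI0, if_neg hIt, hc]

end Helpers4
section Helpers5

variable {n : ℕ}

lemma neg_log_mul_self_le {y : ℝ} (h0 : 0 < y) (h1 : y ≤ 1) : y * (-Real.log y) ≤ 2 := by
  have hs0 : 0 < Real.sqrt y := Real.sqrt_pos.mpr h0
  have hs1 : Real.sqrt y ≤ 1 := Real.sqrt_le_one.mpr h1
  have hss : Real.sqrt y * Real.sqrt y = y := Real.mul_self_sqrt h0.le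
  have hlog : -Real.log y = 2 * (-Real.log (Real.sqrt y)) := by
    rw [Real.log_sqrt h0.le]; ring
  have h2 : -Real.log (Real.sqrt y) ≤ (Real.sqrt y)⁻¹ - 1 := by
    rw [← Real.log_inv]
    exact Real.log_le_sub_one_of_pos (by positivity)
  have h3 : y * (Real.sqrt y)⁻¹ = Real.sqrt y := by
    rw [inv_eq_one_div, mul_one_div, div_eq_iff hs0.ne']
    exact hss.symm
  calc y * (-Real.log y) = 2 * (y * (-Real.log (Real.sqrt y))) := by rw [hlog]; ring
    _ ≤ 2 * (y * ((Real.sqrt y)⁻¹ - 1)) := by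
        have := mul_le_mul_of_nonneg_left h2 h0.le
        linarith
    _ = 2 * (Real.sqrt y - y) := by rw [mul_sub, h3, mul_one]
    _ ≤ 2 := by nlinarith

lemma mul_neg_log_le_two (t : ℝ≥0∞) :
    t * ENNReal.ofReal (-Real.log t.toReal) ≤ 2 := by
  by_cases ht : t = ⊤
  · rw [ht]
    simp [ENNReal.toReal_top, Real.log_zero]
  by_cases ht0 : t = 0
  · rw [ht0, zero_mul]; exact zero_le
  have hy : 0 < t.toReal := ENNReal.toReal_pos ht0 ht
  rcases le_total 1 t.toReal with h1 | h1
  · have : -Real.log t.toReal ≤ 0 := neg_nonpos.mpr (Real.log_nonneg h1)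
    rw [ENNReal.ofReal_eq_zero.mpr this, mul_zero]
    exact zero_le
  · have h4 : t * ENNReal.ofReal (-Real.log t.toReal)
        = ENNReal.ofReal t.toReal * ENNReal.ofReal (-Real.log t.toReal) := by
      rw [ENNReal.ofReal_toReal ht]
    rw [h4, ← ENNReal.ofReal_mul hy.le]
    calc ENNReal.ofReal (t.toReal * -Real.log t.toReal)
        ≤ ENNReal.ofReal 2 := ENNReal.ofReal_le_ofReal (by
          have := neg_log_mul_self_le hy h1
          linarith)
      _ = 2 := by norm_num

lemma relEnt_negpart_finite {m ν : Measure (En n)} [SigmaFinite m] [IsProbabilityMeasure ν]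
    (hac : ν ≪ m) {β : ℝ} (hβ : 0 < β)
    (hC : (∫⁻ x, ENNReal.ofReal (Real.exp (-β * ‖x‖)) ∂m) ≠ ⊤)
    (hM1 : (∫⁻ x, (‖x‖₊ : ℝ≥0∞) ∂ν) ≠ ⊤) :
    (∫⁻ x, ENNReal.ofReal (-Real.log ((ν.rnDeriv m x).toReal)) ∂ν) ≠ ⊤ := by
  set h := ν.rnDeriv m with hh
  have hmeas : Measurable h := Measure.measurable_rnDeriv ν m
  set u : En n → ℝ≥0∞ := fun x => ENNReal.ofReal (Real.exp (-β * ‖x‖)) with hu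
  have humeas : Measurable u :=
    (Real.measurable_exp.comp (measurable_norm.const_mul (-β))).ennreal_ofReal
  set k : En n → ℝ≥0∞ := fun x => h x * ENNReal.ofReal (Real.exp (β * ‖x‖)) with hk
  have hkmeas : Measurable k :=
    hmeas.mul (Real.measurable_exp.comp (measurable_norm.const_mul β)).ennreal_ofReal
  set m' := m.withDensity u with hm'
  have huk : ∀ x, u x * k x = h x := by
    intro x
    rw [hu, hk]
    simp only []
    rw [mul_left_comm, ← ENNReal.ofReal_mul (Real.exp_pos _).le, ← Real.exp_add,
      neg_mul, neg_add_cancel, Real.exp_zero, ENNReal.ofReal_one, mul_one]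
  have hν : m.withDensity h = ν := Measure.withDensity_rnDeriv_eq ν m hac
  have hkν : m'.withDensity k = ν := by
    rw [hm', ← withDensity_mul m humeas hkmeas,
      (by funext x; exact huk x : u * k = h), hν]
  have hνm' : ν ≪ m' := hkν ▸ withDensity_absolutelyContinuous m' k
  have hm'univ : m' univ ≠ ⊤ := by
    rw [hm', withDensity_apply _ MeasurableSet.univ, setLIntegral_univ]
    exact hC
  have hintk : (∫⁻ x, k x ∂m') = 1 := by
    have := withDensity_apply k (MeasurableSet.univ (α := En n)) (μ := m')
    rw [setLIntegral_univ, hkν] at this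
    rw [← this, measure_univ]
  have hklt : ∀ᵐ x ∂ν, k x < ⊤ :=
    (ae_lt_top hkmeas (hintk ▸ ENNReal.one_ne_top)).filter_mono hνm'.ae_le
  have hhlt : ∀ᵐ x ∂ν, h x < ⊤ :=
    (Measure.rnDeriv_lt_top ν m).filter_mono hac.ae_le
  have hkne : ∀ᵐ x ∂ν, k x ≠ 0 := by
    have hs : MeasurableSet {x | k x = 0} := hkmeas (measurableSet_singleton 0)
    have : ν {x | k x = 0} = 0 := by
      rw [← hkν, withDensity_apply _ hs]
      calc (∫⁻ x in {x | k x = 0}, k x ∂m')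
          = ∫⁻ _ in {x | k x = 0}, 0 ∂m' :=
            setLIntegral_congr_fun hs (fun x hx => hx)
        _ = 0 := by rw [lintegral_zero]
    exact (ae_iff (p := fun x => k x ≠ 0)).mpr (by simpa using this)
  -- pointwise decomposition
  have measlogk : Measurable fun x => ENNReal.ofReal (-Real.log ((k x).toReal)) := by
    exact (Real.measurable_log.comp hkmeas.ennreal_toReal).neg.ennreal_ofReal
  have hdecomp : ∀ᵐ x ∂ν, ENNReal.ofReal (-Real.log ((h x).toReal))
      ≤ ENNReal.ofReal (-Real.log ((k x).toReal)) + ENNReal.ofReal (β * ‖x‖) := by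
    filter_upwards [hklt, hkne] with x hx1 hx2
    have hxh : h x = k x * ENNReal.ofReal (Real.exp (-β * ‖x‖)) := by
      rw [hk]
      simp only []
      rw [mul_assoc, ← ENNReal.ofReal_mul (Real.exp_pos _).le, ← Real.exp_add,
        neg_mul, add_neg_cancel, Real.exp_zero, ENNReal.ofReal_one, mul_one]
    have hktr : (k x).toReal ≠ 0 := ENNReal.toReal_ne_zero.mpr ⟨hx2, hx1.ne⟩
    have : -Real.log ((h x).toReal) = -Real.log ((k x).toReal) + β * ‖x‖ := by
      rw [hxh, ENNReal.toReal_mul, ENNReal.toReal_ofReal (Real.exp_pos _).le,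
        Real.log_mul hktr (Real.exp_ne_zero _), Real.log_exp]
      ring
    rw [this]
    exact ENNReal.ofReal_add_le
  have step1 : (∫⁻ x, ENNReal.ofReal (-Real.log ((h x).toReal)) ∂ν)
      ≤ (∫⁻ x, ENNReal.ofReal (-Real.log ((k x).toReal)) ∂ν)
        + ∫⁻ x, ENNReal.ofReal (β * ‖x‖) ∂ν := by
    refine le_trans (lintegral_mono_ae hdecomp) ?_
    rw [lintegral_add_left measlogk]
  have step2 : (∫⁻ x, ENNReal.ofReal (β * ‖x‖) ∂ν) ≠ ⊤ := by
    have : ∀ x : En n, ENNReal.ofReal (β * ‖x‖) = ENNReal.ofReal β * (‖x‖₊ : ℝ≥0∞) := by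
      intro x
      rw [ENNReal.ofReal_mul hβ.le, ofReal_norm, enorm_eq_nnnorm]
    rw [lintegral_congr this, lintegral_const_mul _ measurable_nnnorm.coe_nnreal_ennreal]
    exact ENNReal.mul_ne_top ENNReal.ofReal_ne_top hM1
  have step3 : (∫⁻ x, ENNReal.ofReal (-Real.log ((k x).toReal)) ∂ν) ≠ ⊤ := by
    have : (∫⁻ x, ENNReal.ofReal (-Real.log ((k x).toReal)) ∂ν)
        = ∫⁻ x, k x * ENNReal.ofReal (-Real.log ((k x).toReal)) ∂m' := by
      rw [← hkν, lintegral_withDensity_eq_lintegral_mul m' hkmeas measlogk]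
      rfl
    rw [this]
    refine ne_top_of_le_ne_top ?_ (lintegral_mono fun x => mul_neg_log_le_two (k x))
    rw [lintegral_const]
    exact ENNReal.mul_ne_top (by norm_num) hm'univ
  exact ne_top_of_le_ne_top (ENNReal.add_ne_top.mpr ⟨step3, step2⟩) step1

end Helpers5
section Helpers6

variable {n : ℕ}

lemma eInt_neg_phi_eq_bot {ν : Measure (En n)} {φ : En n → EReal}
    (hP : (∫⁻ x, _root_.posPart (φ x) ∂ν) = ⊤) : eInt ν (fun x => -φ x) = ⊥ := by
  rw [eInt, lintegral_congr fun x => (by rw [neg_neg] :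
    _root_.posPart (- -φ x) = _root_.posPart (φ x)), hP, EReal.coe_ennreal_top, EReal.sub_top]

lemma ae_rnDeriv_ne_zero {m ν : Measure (En n)} [SigmaFinite m] [SigmaFinite ν]
    (hac : ν ≪ m) : ∀ᵐ x ∂ν, ν.rnDeriv m x ≠ 0 := by
  have hmeas : Measurable (ν.rnDeriv m) := Measure.measurable_rnDeriv ν m
  have hν : m.withDensity (ν.rnDeriv m) = ν := Measure.withDensity_rnDeriv_eq ν m hac
  have hs : MeasurableSet {x | ν.rnDeriv m x = 0} := hmeas (measurableSet_singleton 0)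
  have : ν {x | ν.rnDeriv m x = 0} = 0 := by
    calc ν {x | ν.rnDeriv m x = 0}
        = (m.withDensity (ν.rnDeriv m)) {x | ν.rnDeriv m x = 0} := by rw [hν]
      _ = ∫⁻ x in {x | ν.rnDeriv m x = 0}, ν.rnDeriv m x ∂m := withDensity_apply _ hs
      _ = ∫⁻ _ in {x | ν.rnDeriv m x = 0}, 0 ∂m :=
          setLIntegral_congr_fun hs (fun x hx => hx)
      _ = 0 := by rw [lintegral_zero]
  exact (ae_iff (p := fun x => ν.rnDeriv m x ≠ 0)).mpr (by simpa using this)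

lemma upper_bound {m : Measure (En n)} [IsFiniteMeasureOnCompacts m]
    (hint : ∃ β : ℝ, 0 < β ∧ (∫⁻ x, ENNReal.ofReal (Real.exp (-β * ‖x‖)) ∂m) ≠ ⊤)
    {φ : En n → EReal} (hφ : IsF φ) (ν : Measure (En n)) (hν : MemP1 ν) :
    eInt ν (fun x => -φ x) - relEnt ν m ≤ elog (intExpNeg m φ) := by
  obtain ⟨β, hβ, hC⟩ := hint
  haveI : SigmaFinite m := inferInstance
  haveI : IsProbabilityMeasure ν := hν.1
  have hφm : Measurable φ := hφ.1.measurable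
  by_cases hac : ν ≪ m
  swap
  · rw [relEnt, if_neg hac, EReal.sub_top]
    exact bot_le
  by_cases hP : (∫⁻ x, _root_.posPart (φ x) ∂ν) = ⊤
  · rw [eInt_neg_phi_eq_bot hP, EReal.bot_sub]
    exact bot_le
  set h := ν.rnDeriv m with hh
  have hmeas : Measurable h := Measure.measurable_rnDeriv ν m
  have hν' : m.withDensity h = ν := Measure.withDensity_rnDeriv_eq ν m hac
  set B : En n → ℝ := fun x => Real.log (h x).toReal with hB
  have hBmeas : Measurable B := Real.measurable_log.comp hmeas.ennreal_toReal
  have hbn : (∫⁻ x, ENNReal.ofReal (-(B x)) ∂ν) ≠ ⊤ :=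
    relEnt_negpart_finite hac hβ hC hν.2
  have hrelEnt : relEnt ν m = eInt ν (fun x => ((B x : ℝ) : EReal)) := by
    rw [relEnt, if_pos hac]
  -- express eInt parts of relEnt
  have hposB : (∫⁻ x, _root_.posPart ((B x : ℝ) : EReal) ∂ν) = ∫⁻ x, ENNReal.ofReal (B x) ∂ν :=
    lintegral_congr fun x => posPart_coe' (B x)
  have hnegB : (∫⁻ x, _root_.posPart (-((B x : ℝ) : EReal)) ∂ν)
      = ∫⁻ x, ENNReal.ofReal (-(B x)) ∂ν :=
    lintegral_congr fun x => posPart_neg_coe' (B x)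
  by_cases hbp : (∫⁻ x, ENNReal.ofReal (B x) ∂ν) = ⊤
  · -- relative entropy is +∞
    have : relEnt ν m = ⊤ := by
      rw [hrelEnt, eInt, hposB, hnegB, hbp, ennE hbn, EReal.coe_ennreal_top,
        EReal.top_sub_coe]
    rw [this, EReal.sub_top]
    exact bot_le
  have hBint : Integrable B ν := by
    refine ⟨hBmeas.aestronglyMeasurable, ?_⟩
    show (∫⁻ x, (‖B x‖₊ : ℝ≥0∞) ∂ν) < ⊤
    have ptw : ∀ x, (‖B x‖₊ : ℝ≥0∞) ≤ ENNReal.ofReal (B x) + ENNReal.ofReal (-(B x)) := by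
      intro x
      rw [← enorm_eq_nnnorm, Real.enorm_eq_ofReal_abs, ← ofReal_max0 (B x), ← ofReal_max0 (-(B x)),
        ← ENNReal.ofReal_add (le_max_right _ _) (le_max_right _ _)]
      refine ENNReal.ofReal_le_ofReal (abs_le.mpr ⟨?_, ?_⟩)
      · have h1 := le_max_left (-(B x)) 0
        have h2 := le_max_right (B x) 0
        linarith
      · have h1 := le_max_left (B x) 0
        have h2 := le_max_right (-(B x)) 0
        linarith
    calc (∫⁻ x, (‖B x‖₊ : ℝ≥0∞) ∂ν)
        ≤ ∫⁻ x, (ENNReal.ofReal (B x) + ENNReal.ofReal (-(B x))) ∂ν := lintegral_mono ptw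
      _ = (∫⁻ x, ENNReal.ofReal (B x) ∂ν) + ∫⁻ x, ENNReal.ofReal (-(B x)) ∂ν :=
          lintegral_add_left hBmeas.ennreal_ofReal _
      _ < ⊤ := ENNReal.add_lt_top.mpr ⟨lt_top_iff_ne_top.mpr hbp, lt_top_iff_ne_top.mpr hbn⟩
  have hE : relEnt ν m = ((∫ x, B x ∂ν : ℝ) : EReal) := by rw [hrelEnt, eInt_coe hBint]
  -- a.e. finiteness of φ
  have hφtop : ∀ᵐ x ∂ν, φ x ≠ ⊤ := by
    filter_upwards [ae_lt_top (measurable_posPart'.comp hφm) hP] with x hx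
    intro hxx
    have hx' : _root_.posPart (φ x) < ⊤ := hx
    rw [hxx, posPart_top'] at hx'
    exact absurd hx' (lt_irrefl _)
  set A : En n → ℝ := fun x => -((φ x).toReal) with hA
  have hAmeas : Measurable A := hφm.ereal_toReal.neg
  have hAeq : eInt ν (fun x => -φ x) = eInt ν (fun x => ((A x : ℝ) : EReal)) := by
    refine eInt_congr_ae ?_
    filter_upwards [hφtop] with x hx
    rw [hA]
    simp only []
    rw [EReal.coe_neg, EReal.coe_toReal hx (hφ.2.2.2 x)]
  have hAneg : (∫⁻ x, ENNReal.ofReal (-(A x)) ∂ν) ≠ ⊤ := by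
    have : (∫⁻ x, ENNReal.ofReal (-(A x)) ∂ν) = ∫⁻ x, _root_.posPart (φ x) ∂ν := by
      refine lintegral_congr_ae ?_
      filter_upwards [hφtop] with x hx
      rw [hA]
      simp only [neg_neg]
      rw [ePosPartEq, if_neg hx]
    rw [this]
    exact hP
  -- the tilted density
  set w : En n → ℝ≥0∞ := fun x => expNeg (φ x) * (h x)⁻¹ with hw
  have hwmeas : Measurable w := (measurable_expNeg.comp hφm).mul hmeas.inv
  have hwint : (∫⁻ x, w x ∂ν) ≤ intExpNeg m φ := by
    have : (∫⁻ x, w x ∂ν) = ∫⁻ x, (h * w) x ∂m := by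
      rw [← hν', lintegral_withDensity_eq_lintegral_mul m hmeas hwmeas]
    rw [this, intExpNeg]
    refine lintegral_mono fun x => ?_
    calc (h * w) x = expNeg (φ x) * (h x * (h x)⁻¹) := by
          simp only [Pi.mul_apply, hw]
          ring
      _ ≤ expNeg (φ x) * 1 := mul_le_mul_right (ENNReal.mul_inv_le_one (h x)) _
      _ = expNeg (φ x) := mul_one _
  have hhlt : ∀ᵐ x ∂ν, h x < ⊤ := (Measure.rnDeriv_lt_top ν m).filter_mono hac.ae_le
  have hh0 : ∀ᵐ x ∂ν, h x ≠ 0 := ae_rnDeriv_ne_zero hac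
  have helog : ∀ᵐ x ∂ν, ((A x - B x : ℝ) : EReal) = elog (w x) := by
    filter_upwards [hhlt, hh0, hφtop] with x hx1 hx2 hx3
    have hφx : expNeg (φ x) = ENNReal.ofReal (Real.exp (-(φ x).toReal)) := by
      rw [expNeg, if_neg (hφ.2.2.2 x), if_neg hx3]
    have hwne0 : w x ≠ 0 := by
      rw [hw]
      simp only []
      exact mul_ne_zero (by rw [hφx]; exact (ENNReal.ofReal_pos.mpr
        (Real.exp_pos _)).ne') (ENNReal.inv_ne_zero.mpr hx1.ne)
    have hwnetop : w x ≠ ⊤ := by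
      rw [hw]
      simp only []
      exact ENNReal.mul_ne_top (by rw [hφx]; exact ENNReal.ofReal_ne_top)
        (ENNReal.inv_ne_top.mpr hx2)
    have htr : (w x).toReal = Real.exp (-(φ x).toReal) * ((h x).toReal)⁻¹ := by
      rw [hw]
      simp only []
      rw [ENNReal.toReal_mul, hφx, ENNReal.toReal_ofReal (Real.exp_pos _).le,
        ENNReal.toReal_inv]
    have hhtr : (h x).toReal ≠ 0 := ENNReal.toReal_ne_zero.mpr ⟨hx2, hx1.ne⟩
    rw [elog, if_neg hwne0, if_neg hwnetop, htr,
      Real.log_mul (Real.exp_ne_zero _) (inv_ne_zero hhtr), Real.log_exp,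
      Real.log_inv]
    rw [hA, hB]
    simp only []
    push_cast
    rw [sub_eq_add_neg]
  calc eInt ν (fun x => -φ x) - relEnt ν m
      = eInt ν (fun x => ((A x : ℝ) : EReal)) - ((∫ x, B x ∂ν : ℝ) : EReal) := by
        rw [hAeq, hE]
    _ ≤ eInt ν (fun x => ((A x - B x : ℝ) : EReal)) := by
        rw [EReal.sub_le_iff_le_add (Or.inl (EReal.coe_ne_bot _))
          (Or.inl (EReal.coe_ne_top _))]
        exact eInt_coe_sub_le hAmeas hBmeas hBint hAneg
    _ = eInt ν (fun x => elog (w x)) := eInt_congr_ae helog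
    _ ≤ elog (∫⁻ x, w x ∂ν) := jensen_elog hwmeas
    _ ≤ elog (intExpNeg m φ) := monotone_elog hwint

end Helpers6
section Helpers7

variable {n : ℕ}

lemma lsc_lower_bound {φ : En n → EReal} (hlsc : LowerSemicontinuous φ)
    (hbot : ∀ x, φ x ≠ ⊥) {K : Set (En n)} (hK : IsCompact K) :
    ∃ M : ℝ, 0 ≤ M ∧ ∀ x ∈ K, (((-M : ℝ) : EReal)) ≤ φ x := by
  set U : ℕ → Set (En n) := fun j => {x | (((-(j : ℝ) : ℝ)) : EReal) < φ x} with hU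
  have hUopen : ∀ j, IsOpen (U j) := fun j => hlsc.isOpen_preimage _
  have hcover : K ⊆ ⋃ j, U j := by
    intro x _
    rcases eq_or_ne (φ x) ⊤ with hx | hx
    · exact mem_iUnion.mpr ⟨0, by simp [hU, hx]⟩
    · have hreal : φ x = ((φ x).toReal : EReal) := (EReal.coe_toReal hx (hbot x)).symm
      obtain ⟨j, hj⟩ := exists_nat_gt (-(φ x).toReal)
      refine mem_iUnion.mpr ⟨j, ?_⟩
      rw [hU]
      simp only [mem_setOf_eq]
      rw [hreal]
      exact_mod_cast (by linarith : -(j : ℝ) < (φ x).toReal)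
  obtain ⟨t, ht⟩ := hK.elim_finite_subcover U hUopen hcover
  refine ⟨(t.sup id : ℕ), Nat.cast_nonneg _, fun x hx => ?_⟩
  obtain ⟨j, hjt, hjx⟩ := by
    simpa only [mem_iUnion, exists_prop] using ht hx
  have hmono : ((-(t.sup id : ℕ) : ℝ) : EReal) ≤ ((-(j : ℝ) : ℝ) : EReal) := by
    have : (j : ℝ) ≤ ((t.sup id : ℕ) : ℝ) := by
      exact_mod_cast Finset.le_sup (f := id) hjt
    exact_mod_cast (by linarith : -((t.sup id : ℕ) : ℝ) ≤ -(j : ℝ))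
  exact le_trans hmono (le_of_lt hjx)

lemma expNeg_le_of_ge {M : ℝ} {t : EReal} (ht : (((-M : ℝ)) : EReal) ≤ t) :
    expNeg t ≤ ENNReal.ofReal (Real.exp M) := by
  calc expNeg t ≤ expNeg (((-M : ℝ) : EReal)) := antitone_expNeg ht
    _ = ENNReal.ofReal (Real.exp M) := by rw [expNeg_coe, neg_neg]

lemma ZR_lt_top {m : Measure (En n)} [IsFiniteMeasureOnCompacts m]
    {φ : En n → EReal} (hφ : IsF φ) (R : ℕ) :
    (∫⁻ x in Metric.closedBall 0 R, expNeg (φ x) ∂m) ≠ ⊤ := by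
  obtain ⟨M, _, hM⟩ := lsc_lower_bound hφ.1 hφ.2.2.2 (isCompact_closedBall (0 : En n) R)
  have hb : (∫⁻ x in Metric.closedBall 0 R, expNeg (φ x) ∂m)
      ≤ ∫⁻ _ in Metric.closedBall 0 R, ENNReal.ofReal (Real.exp M) ∂m := by
    refine setLIntegral_mono' measurableSet_closedBall fun x hx => expNeg_le_of_ge (hM x hx)
  refine ne_top_of_le_ne_top ?_ hb
  rw [setLIntegral_const]
  exact ENNReal.mul_ne_top ENNReal.ofReal_ne_top
    (isCompact_closedBall (0 : En n) R).measure_lt_top.ne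

lemma Z_eq_iSup {m : Measure (En n)} {φ : En n → EReal} (hφ : IsF φ) :
    intExpNeg m φ = ⨆ R : ℕ, ∫⁻ x in Metric.closedBall 0 R, expNeg (φ x) ∂m := by
  have hmeas : Measurable fun x => expNeg (φ x) := measurable_expNeg.comp hφ.1.measurable
  have h1 : ∀ R : ℕ, (∫⁻ x in Metric.closedBall 0 R, expNeg (φ x) ∂m)
      = ∫⁻ x, (Metric.closedBall (0 : En n) R).indicator (fun x => expNeg (φ x)) x ∂m :=
    fun R => (lintegral_indicator measurableSet_closedBall _).symm
  have hmono : Monotone fun R : ℕ =>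
      (Metric.closedBall (0 : En n) R).indicator (fun x => expNeg (φ x)) := by
    intro a b hab
    exact indicator_le_indicator_of_subset
      (Metric.closedBall_subset_closedBall (by exact_mod_cast hab)) (fun x => zero_le)
  have hsup : ∀ x, (⨆ R : ℕ, (Metric.closedBall (0 : En n) R).indicator
      (fun x => expNeg (φ x)) x) = expNeg (φ x) := by
    intro x
    refine le_antisymm (iSup_le fun R => indicator_le_self _ _ x) ?_
    obtain ⟨R, hR⟩ := exists_nat_ge ‖x‖
    refine le_iSup_of_le R ?_
    rw [indicator_of_mem (by simpa [Metric.mem_closedBall, dist_zero_right] using hR)]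
  calc intExpNeg m φ = ∫⁻ x, ⨆ R : ℕ, (Metric.closedBall (0 : En n) R).indicator
        (fun x => expNeg (φ x)) x ∂m := by
        rw [intExpNeg, lintegral_congr hsup]
    _ = ⨆ R : ℕ, ∫⁻ x, (Metric.closedBall (0 : En n) R).indicator
        (fun x => expNeg (φ x)) x ∂m := by
        rw [lintegral_iSup (fun R => hmeas.indicator measurableSet_closedBall) hmono]
    _ = ⨆ R : ℕ, ∫⁻ x in Metric.closedBall 0 R, expNeg (φ x) ∂m := by
        refine iSup_congr fun R => (h1 R).symm

end Helpers7
section Helpers8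

variable {n : ℕ}

/-- The tilted probability measure supported on the ball of radius `R`. -/
def gRfun (m : Measure (En n)) (φ : En n → EReal) (R : ℕ) (x : En n) : ℝ≥0∞ :=
  (∫⁻ y in Metric.closedBall 0 R, expNeg (φ y) ∂m)⁻¹ *
    (Metric.closedBall (0 : En n) R).indicator (fun y => expNeg (φ y)) x

def nuR (m : Measure (En n)) (φ : En n → EReal) (R : ℕ) : Measure (En n) :=
  m.withDensity (gRfun m φ R)

lemma gRfun_measurable {m : Measure (En n)} {φ : En n → EReal} (hφ : IsF φ) (R : ℕ) :
    Measurable (gRfun m φ R) :=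
  ((measurable_expNeg.comp hφ.1.measurable).indicator measurableSet_closedBall).const_mul _

lemma nuR_prob {m : Measure (En n)} [IsFiniteMeasureOnCompacts m]
    {φ : En n → EReal} (hφ : IsF φ) (R : ℕ)
    (hZpos : (∫⁻ y in Metric.closedBall 0 R, expNeg (φ y) ∂m) ≠ 0) :
    IsProbabilityMeasure (nuR m φ R) := by
  constructor
  rw [nuR, withDensity_apply _ MeasurableSet.univ, setLIntegral_univ]
  have e1 : (∫⁻ x, gRfun m φ R x ∂m)
      = (∫⁻ y in Metric.closedBall 0 R, expNeg (φ y) ∂m)⁻¹ *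
        ∫⁻ x, (Metric.closedBall (0 : En n) R).indicator (fun y => expNeg (φ y)) x ∂m :=
    lintegral_const_mul _ ((measurable_expNeg.comp hφ.1.measurable).indicator
      measurableSet_closedBall)
  rw [e1, lintegral_indicator measurableSet_closedBall]
  exact ENNReal.inv_mul_cancel hZpos (ZR_lt_top hφ R)

lemma nuR_compl_ball {m : Measure (En n)} {φ : En n → EReal} (hφ : IsF φ) (R : ℕ) :
    nuR m φ R (Metric.closedBall (0 : En n) R)ᶜ = 0 := by
  rw [nuR, withDensity_apply _ measurableSet_closedBall.compl]
  calc (∫⁻ x in (Metric.closedBall (0 : En n) R)ᶜ, gRfun m φ R x ∂m)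
      = ∫⁻ _ in (Metric.closedBall (0 : En n) R)ᶜ, 0 ∂m := by
        refine setLIntegral_congr_fun measurableSet_closedBall.compl
          (fun x hx => ?_)
        rw [gRfun, indicator_of_notMem (by exact hx), mul_zero]
    _ = 0 := lintegral_zero

lemma nuR_ae_ball {m : Measure (En n)} {φ : En n → EReal} (hφ : IsF φ) (R : ℕ) :
    ∀ᵐ x ∂(nuR m φ R), x ∈ Metric.closedBall (0 : En n) R := by
  refine (ae_iff.mpr ?_)
  have h0 : {x : En n | ¬x ∈ Metric.closedBall (0 : En n) R}
      = (Metric.closedBall (0 : En n) R)ᶜ := rfl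
  rw [h0]
  exact nuR_compl_ball (m := m) hφ R

lemma nuR_ae_ne_top {m : Measure (En n)} {φ : En n → EReal} (hφ : IsF φ) (R : ℕ) :
    ∀ᵐ x ∂(nuR m φ R), φ x ≠ ⊤ := by
  refine (ae_iff.mpr ?_)
  have hs : MeasurableSet {x : En n | φ x = ⊤} :=
    hφ.1.measurable (measurableSet_singleton ⊤)
  have : nuR m φ R {x | φ x = ⊤} = 0 := by
    rw [nuR, withDensity_apply _ hs]
    calc (∫⁻ x in {x | φ x = ⊤}, gRfun m φ R x ∂m)
        = ∫⁻ _ in {x | φ x = ⊤}, 0 ∂m := by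
          refine setLIntegral_congr_fun hs (fun x hx => ?_)
          rw [gRfun]
          by_cases hxK : x ∈ Metric.closedBall (0 : En n) R
          · rw [indicator_of_mem hxK, hx, expNeg_top, mul_zero]
          · rw [indicator_of_notMem hxK, mul_zero]
      _ = 0 := lintegral_zero
  simpa using this

lemma nuR_memP1 {m : Measure (En n)} [IsFiniteMeasureOnCompacts m]
    {φ : En n → EReal} (hφ : IsF φ) (R : ℕ)
    (hZpos : (∫⁻ y in Metric.closedBall 0 R, expNeg (φ y) ∂m) ≠ 0) :
    MemP1 (nuR m φ R) := by
  haveI := nuR_prob hφ R hZpos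
  refine ⟨inferInstance, ?_⟩
  have hbound : ∀ x, (‖x‖₊ : ℝ≥0∞) * gRfun m φ R x ≤ ENNReal.ofReal R * gRfun m φ R x := by
    intro x
    by_cases hxK : x ∈ Metric.closedBall (0 : En n) R
    · refine mul_le_mul_left ?_ _
      rw [← enorm_eq_nnnorm, ← ofReal_norm]
      exact ENNReal.ofReal_le_ofReal (by simpa [Metric.mem_closedBall,
        dist_zero_right] using hxK)
    · rw [gRfun, indicator_of_notMem hxK, mul_zero, mul_zero, mul_zero]
  have h1 : (∫⁻ x, (‖x‖₊ : ℝ≥0∞) ∂(nuR m φ R))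
      = ∫⁻ x, gRfun m φ R x * (‖x‖₊ : ℝ≥0∞) ∂m := by
    rw [nuR, lintegral_withDensity_eq_lintegral_mul m (gRfun_measurable hφ R)
      measurable_nnnorm.coe_nnreal_ennreal]
    rfl
  rw [h1]
  have h2 : (∫⁻ x, gRfun m φ R x * (‖x‖₊ : ℝ≥0∞) ∂m)
      ≤ ∫⁻ x, ENNReal.ofReal R * gRfun m φ R x ∂m :=
    lintegral_mono fun x => by rw [mul_comm]; exact hbound x
  refine ne_top_of_le_ne_top ?_ h2
  rw [lintegral_const_mul _ (gRfun_measurable hφ R)]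
  have h3 : (∫⁻ x, gRfun m φ R x ∂m) = 1 := by
    have := (nuR_prob hφ R hZpos).measure_univ
    rwa [nuR, withDensity_apply _ MeasurableSet.univ, setLIntegral_univ] at this
  rw [h3, mul_one]
  exact ENNReal.ofReal_ne_top

lemma nuR_compactSupport {m : Measure (En n)} {φ : En n → EReal} (hφ : IsF φ) (R : ℕ) :
    HasCompactSupportMeasure (nuR m φ R) :=
  ⟨Metric.closedBall 0 R, isCompact_closedBall _ _, nuR_compl_ball hφ R⟩

lemma nuR_integrable_toReal {m : Measure (En n)} [IsFiniteMeasureOnCompacts m]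
    {φ : En n → EReal} (hφ : IsF φ) (R : ℕ)
    (hZpos : (∫⁻ y in Metric.closedBall 0 R, expNeg (φ y) ∂m) ≠ 0) :
    Integrable (fun x => -((φ x).toReal)) (nuR m φ R) := by
  obtain ⟨M, hM0, hM⟩ := lsc_lower_bound hφ.1 hφ.2.2.2 (isCompact_closedBall (0 : En n) R)
  set Z := ∫⁻ y in Metric.closedBall 0 R, expNeg (φ y) ∂m with hZ
  refine ⟨(hφ.1.measurable.ereal_toReal.neg).aestronglyMeasurable, ?_⟩
  show (∫⁻ x, (‖-((φ x).toReal)‖₊ : ℝ≥0∞) ∂(nuR m φ R)) < ⊤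
  have h1 : (∫⁻ x, (‖-((φ x).toReal)‖₊ : ℝ≥0∞) ∂(nuR m φ R))
      = ∫⁻ x, gRfun m φ R x * (‖-((φ x).toReal)‖₊ : ℝ≥0∞) ∂m := by
    rw [nuR, lintegral_withDensity_eq_lintegral_mul m (gRfun_measurable hφ R)
      (show Measurable fun x => (‖-((φ x).toReal)‖₊ : ℝ≥0∞) from
        hφ.1.measurable.ereal_toReal.neg.nnnorm.coe_nnreal_ennreal)]
    rfl
  rw [h1]
  -- pointwise bound
  set c := max 1 (M * Real.exp M) with hc
  have hptw : ∀ x, gRfun m φ R x * (‖-((φ x).toReal)‖₊ : ℝ≥0∞)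
      ≤ Z⁻¹ * (Metric.closedBall (0 : En n) R).indicator
          (fun _ => ENNReal.ofReal c) x := by
    intro x
    by_cases hxK : x ∈ Metric.closedBall (0 : En n) R
    · rw [gRfun, indicator_of_mem hxK, indicator_of_mem hxK, mul_assoc]
      refine mul_le_mul_right ?_ _
      rcases eq_or_ne (φ x) ⊤ with hx | hx
      · rw [hx, expNeg_top, zero_mul]
        exact zero_le
      · have hφreal : expNeg (φ x) = ENNReal.ofReal (Real.exp (-(φ x).toReal)) := by
          rw [expNeg, if_neg (hφ.2.2.2 x), if_neg hx]
        have hs := hM x hxK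
        have hsR : -M ≤ (φ x).toReal := by
          have := EReal.toReal_le_toReal hs (EReal.coe_ne_bot _) hx
          simpa using this
        rw [hφreal, ← enorm_eq_nnnorm, Real.enorm_eq_ofReal_abs, abs_neg,
          ← ENNReal.ofReal_mul (Real.exp_pos _).le]
        refine ENNReal.ofReal_le_ofReal ?_
        set s := (φ x).toReal
        rcases le_total 0 s with h0 | h0
        · rw [abs_of_nonneg h0]
          have h4 : s ≤ Real.exp s := (Real.add_one_le_exp s).trans' (by linarith)
          have h5 : Real.exp (-s) * s ≤ Real.exp (-s) * Real.exp s :=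
            mul_le_mul_of_nonneg_left h4 (Real.exp_pos _).le
          rw [← Real.exp_add, neg_add_cancel, Real.exp_zero] at h5
          exact le_trans h5 (le_max_left _ _)
        · rw [abs_of_nonpos h0]
          have h4 : Real.exp (-s) ≤ Real.exp M := Real.exp_le_exp.mpr (by linarith)
          have h5 : -s ≤ M := by linarith
          refine le_trans ?_ (le_max_right _ _)
          calc Real.exp (-s) * (-s) ≤ Real.exp M * (-s) :=
                mul_le_mul_of_nonneg_right h4 (by linarith)
            _ ≤ Real.exp M * M := mul_le_mul_of_nonneg_left h5 (Real.exp_pos _).le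
            _ = M * Real.exp M := mul_comm _ _
    · rw [gRfun, indicator_of_notMem hxK]
      simp
  refine lt_of_le_of_lt (lintegral_mono hptw) ?_
  rw [lintegral_const_mul _ (measurable_const.indicator measurableSet_closedBall),
    lintegral_indicator measurableSet_closedBall, setLIntegral_const]
  refine ENNReal.mul_lt_top ?_ ?_
  · exact lt_top_iff_ne_top.mpr (ENNReal.inv_ne_top.mpr hZpos)
  · exact ENNReal.mul_lt_top (lt_top_iff_ne_top.mpr ENNReal.ofReal_ne_top)
      (isCompact_closedBall (0 : En n) R).measure_lt_top

end Helpers8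
section Helpers9

variable {n : ℕ}

lemma nuR_term {m : Measure (En n)} [IsFiniteMeasureOnCompacts m]
    {φ : En n → EReal} (hφ : IsF φ) (R : ℕ)
    (hZpos : (∫⁻ y in Metric.closedBall 0 R, expNeg (φ y) ∂m) ≠ 0) :
    eInt (nuR m φ R) (fun x => -φ x) - relEnt (nuR m φ R) m
      = elog (∫⁻ y in Metric.closedBall 0 R, expNeg (φ y) ∂m) := by
  haveI : SigmaFinite m := inferInstance
  haveI := nuR_prob hφ R hZpos
  set Z := ∫⁻ y in Metric.closedBall 0 R, expNeg (φ y) ∂m with hZ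
  have hZt : Z ≠ ⊤ := ZR_lt_top hφ R
  set ν := nuR m φ R with hν
  set L := Real.log Z.toReal with hL
  set A : En n → ℝ := fun x => -((φ x).toReal) with hA
  have hAint : Integrable A ν := nuR_integrable_toReal hφ R hZpos
  have hac : ν ≪ m := by
    rw [hν, nuR]
    exact withDensity_absolutelyContinuous _ _
  have hrn : ∀ᵐ x ∂ν, ν.rnDeriv m x = gRfun m φ R x :=
    (Measure.rnDeriv_withDensity m (gRfun_measurable hφ R)).filter_mono hac.ae_le
  have hZtr : Z.toReal ≠ 0 := ENNReal.toReal_ne_zero.mpr ⟨hZpos, hZt⟩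
  -- pointwise identity for the log of the density
  have hptw : ∀ᵐ x ∂ν, Real.log ((ν.rnDeriv m x).toReal) = A x - L := by
    filter_upwards [hrn, nuR_ae_ball hφ R, nuR_ae_ne_top hφ R] with x h1 h2 h3
    rw [h1, gRfun, indicator_of_mem h2]
    have hφreal : expNeg (φ x) = ENNReal.ofReal (Real.exp (-(φ x).toReal)) := by
      rw [expNeg, if_neg (hφ.2.2.2 x), if_neg h3]
    rw [hφreal, ENNReal.toReal_mul, ENNReal.toReal_inv,
      ENNReal.toReal_ofReal (Real.exp_pos _).le,
      Real.log_mul (inv_ne_zero hZtr) (Real.exp_ne_zero _), Real.log_inv, Real.log_exp,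
      hA]
    simp only []
    ring
  have hrel : relEnt ν m = ((∫ x, A x ∂ν - L : ℝ) : EReal) := by
    rw [relEnt, if_pos hac]
    have e1 : eInt ν (fun x => ((Real.log ((ν.rnDeriv m x).toReal) : ℝ) : EReal))
        = eInt ν (fun x => ((A x - L : ℝ) : EReal)) :=
      eInt_congr_ae (hptw.mono fun x hx => by rw [hx])
    rw [e1, eInt_coe (show Integrable (fun x => A x - L) ν from
        hAint.sub (integrable_const L)),
      integral_sub hAint (integrable_const L), integral_const, probReal_univ]
    norm_num
  have hneg : eInt ν (fun x => -φ x) = ((∫ x, A x ∂ν : ℝ) : EReal) := by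
    have e1 : eInt ν (fun x => -φ x) = eInt ν (fun x => ((A x : ℝ) : EReal)) := by
      refine eInt_congr_ae ?_
      filter_upwards [nuR_ae_ne_top hφ R] with x hx
      rw [hA]
      simp only []
      rw [EReal.coe_neg, EReal.coe_toReal hx (hφ.2.2.2 x)]
    rw [e1, eInt_coe hAint]
  rw [hneg, hrel, ← EReal.coe_sub, sub_sub_cancel, elog, if_neg hZpos, if_neg hZt]

lemma lower_bound {m : Measure (En n)} [IsFiniteMeasureOnCompacts m]
    {φ : En n → EReal} (hφ : IsF φ) (P : Measure (En n) → Prop)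
    (hP : ∀ R : ℕ, (∫⁻ y in Metric.closedBall 0 R, expNeg (φ y) ∂m) ≠ 0 →
      P (nuR m φ R)) :
    elog (intExpNeg m φ) ≤
      ⨆ (ν : Measure (En n)) (_ : P ν), (eInt ν (fun x => -φ x) - relEnt ν m) := by
  refine le_of_forall_lt fun c hc => ?_
  set Z := intExpNeg m φ with hZdef
  have hZ0 : Z ≠ 0 := by
    intro h
    rw [h, elog, if_pos rfl] at hc
    exact absurd hc (not_lt_bot)
  have hr : ∃ r : ℝ, c < (r : EReal) ∧ ENNReal.ofReal (Real.exp r) < Z := by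
    by_cases hZt : Z = ⊤
    · have hct : c < ⊤ := by
        rw [hZt] at hc
        rcases eq_or_ne (intExpNeg m φ) 0 with h | h
        · exact lt_of_lt_of_le hc le_top
        · exact lt_of_lt_of_le hc le_top
      induction c using EReal.rec with
      | bot => exact ⟨0, EReal.bot_lt_coe _, by rw [hZt]; exact
          ENNReal.ofReal_lt_top⟩
      | coe c => exact ⟨c + 1, by exact_mod_cast (by linarith : c < c + 1),
          by rw [hZt]; exact ENNReal.ofReal_lt_top⟩
      | top => exact absurd hct (lt_irrefl _)
    · have hZtr : 0 < Z.toReal := ENNReal.toReal_pos hZ0 hZt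
      have hcL : c < ((Real.log Z.toReal : ℝ) : EReal) := by
        rw [hZdef, elog, if_neg hZ0, if_neg hZt] at hc
        exact hc
      have hofReal : ∀ r : ℝ, r < Real.log Z.toReal → ENNReal.ofReal (Real.exp r) < Z := by
        intro r hr
        rw [← ENNReal.ofReal_toReal hZt]
        exact (ENNReal.ofReal_lt_ofReal_iff hZtr).mpr
          ((Real.lt_log_iff_exp_lt hZtr).mp hr)
      induction c using EReal.rec with
      | bot => exact ⟨Real.log Z.toReal - 1, EReal.bot_lt_coe _,
          hofReal _ (by linarith)⟩
      | coe c =>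
          have hcL' : c < Real.log Z.toReal := by exact_mod_cast hcL
          exact ⟨(c + Real.log Z.toReal) / 2,
            by exact_mod_cast (by linarith : c < (c + Real.log Z.toReal) / 2),
            hofReal _ (by linarith)⟩
      | top => exact absurd hcL (not_lt.mpr (le_of_lt (EReal.coe_lt_top _)))
  obtain ⟨r, hcr, hrZ⟩ := hr
  rw [hZdef, Z_eq_iSup hφ] at hrZ
  obtain ⟨R, hR⟩ := lt_iSup_iff.mp hrZ
  have hZR0 : (∫⁻ y in Metric.closedBall 0 R, expNeg (φ y) ∂m) ≠ 0 :=
    (lt_trans (ENNReal.ofReal_pos.mpr (Real.exp_pos r)) hR).ne'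
  have hZRt := ZR_lt_top (m := m) hφ R
  have hlt : (r : EReal) < elog (∫⁻ y in Metric.closedBall 0 R, expNeg (φ y) ∂m) := by
    rw [elog, if_neg hZR0, if_neg hZRt]
    have h1 : Real.exp r < (∫⁻ y in Metric.closedBall 0 R, expNeg (φ y) ∂m).toReal := by
      have := (ENNReal.toReal_lt_toReal ENNReal.ofReal_ne_top hZRt).mpr hR
      rwa [ENNReal.toReal_ofReal (Real.exp_pos r).le] at this
    have h2 : 0 < (∫⁻ y in Metric.closedBall 0 R, expNeg (φ y) ∂m).toReal :=
      lt_trans (Real.exp_pos r) h1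
    exact_mod_cast (Real.lt_log_iff_exp_lt h2).mpr h1
  refine lt_of_lt_of_le (lt_trans hcr hlt) ?_
  rw [← nuR_term hφ R hZR0]
  exact le_iSup₂ (f := fun ν (_ : P ν) => eInt ν (fun x => -φ x) - relEnt ν m)
    (nuR m φ R) (hP R hZR0)

end Helpers9
section Helpers10

variable {n : ℕ}

lemma map_withDensity_self {μ : Measure (En n)} {g : En n → ℝ≥0∞} (hg : Measurable g)
    {e : En n → En n} (he : Measurable e) (hμ : Measure.map e μ = μ)
    (hge : ∀ x, g (e x) = g x) :
    Measure.map e (μ.withDensity g) = μ.withDensity g := by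
  refine Measure.ext fun s hs => ?_
  rw [Measure.map_apply he hs, withDensity_apply _ (he hs), withDensity_apply _ hs]
  calc (∫⁻ x in e ⁻¹' s, g x ∂μ)
      = ∫⁻ x in e ⁻¹' s, g (e x) ∂μ :=
        setLIntegral_congr_fun (he hs) (fun x _ => (hge x).symm)
    _ = ∫⁻ y in s, g y ∂(Measure.map e μ) := (setLIntegral_map hs hg he).symm
    _ = ∫⁻ y in s, g y ∂μ := by rw [hμ]

lemma gRfun_inv {m : Measure (En n)} {φ : En n → EReal} (R : ℕ)
    {e : En n → En n} (hnorm : ∀ x, ‖e x‖ = ‖x‖) (hφe : ∀ x, φ (e x) = φ x) (x : En n) :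
    gRfun m φ R (e x) = gRfun m φ R x := by
  rw [gRfun, gRfun]
  congr 1
  by_cases hx : x ∈ Metric.closedBall (0 : En n) R
  · have hex : e x ∈ Metric.closedBall (0 : En n) R := by
      simp only [Metric.mem_closedBall, dist_zero_right] at hx ⊢
      rw [hnorm]
      exact hx
    rw [indicator_of_mem hex, indicator_of_mem hx, hφe]
  · have hex : e x ∉ Metric.closedBall (0 : En n) R := by
      simp only [Metric.mem_closedBall, dist_zero_right] at hx ⊢
      rw [hnorm]
      exact hx
    rw [indicator_of_notMem hex, indicator_of_notMem hx]

lemma nuR_symm {m : Measure (En n)} {φ : En n → EReal} (hφ : IsF φ) (R : ℕ)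
    (hφs : SymmFun φ) (hms : SymmMeas m) : SymmMeas (nuR m φ R) := by
  rw [SymmMeas, nuR]
  exact map_withDensity_self (gRfun_measurable hφ R) measurable_neg hms
    fun x => gRfun_inv R (fun x => norm_neg x) hφs x

lemma signFlip_apply (ε : Fin n → Bool) (x : En n) (i : Fin n) :
    signFlip ε x i = if ε i then x i else -x i := rfl

lemma continuous_signFlip (ε : Fin n → Bool) : Continuous (signFlip (n := n) ε) := by
  have h2 : Continuous fun (x : En n) => (fun i => if ε i then x i else -x i :
      Fin n → ℝ) := by
    refine continuous_pi fun i => ?_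
    have hxi : Continuous fun (x : En n) => x i :=
      (continuous_apply i).comp (EuclideanSpace.equiv (Fin n) ℝ).continuous
    by_cases hε : ε i
    · simpa [hε] using hxi
    · simp only [hε, ↓reduceIte]; exact hxi.neg
  exact ((EuclideanSpace.equiv (Fin n) ℝ).symm.continuous).comp h2

lemma measurable_signFlip (ε : Fin n → Bool) : Measurable (signFlip (n := n) ε) :=
  (continuous_signFlip ε).measurable

lemma norm_signFlip (ε : Fin n → Bool) (x : En n) : ‖signFlip ε x‖ = ‖x‖ := by
  rw [EuclideanSpace.norm_eq, EuclideanSpace.norm_eq]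
  congr 1
  refine Finset.sum_congr rfl fun i _ => ?_
  rw [signFlip_apply]
  by_cases hε : ε i
  · rw [if_pos hε]
  · rw [if_neg hε, norm_neg]

lemma nuR_uncond {m : Measure (En n)} {φ : En n → EReal} (hφ : IsF φ) (R : ℕ)
    (hφu : UncondFun φ) (hmu : UncondMeas m) : UncondMeas (nuR m φ R) := by
  intro ε
  rw [nuR]
  exact map_withDensity_self (gRfun_measurable hφ R) (measurable_signFlip ε) (hmu ε)
    fun x => gRfun_inv R (norm_signFlip ε) (fun y => hφu ε y) x

end Helpers10
/-- Under the integrability assumption `∫ e^{-β|x|} dm < ∞`, for any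
`φ ∈ F(ℝⁿ)` one has `log ∫ e^{-φ} dm = sup_{ν ∈ P₁} {∫(-φ) dν − H(ν|m)}`, the supremum can
be restricted to compactly supported `ν`, and if `φ` and `m` are symmetric
(resp. unconditional) it can further be restricted to compactly supported symmetric
(resp. unconditional) `ν`. -/
theorem statement9 (n : ℕ) (m : Measure (En n)) [IsFiniteMeasureOnCompacts m]
    (hint : ∃ β : ℝ, 0 < β ∧ ∫⁻ x, ENNReal.ofReal (Real.exp (-β * ‖x‖)) ∂m ≠ ⊤)
    (φ : En n → EReal) (hφ : IsF φ) :
    elog (intExpNeg m φ) =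
      (⨆ (ν : Measure (En n)) (_ : MemP1 ν), (eInt ν (fun x => -φ x) - relEnt ν m)) ∧
    elog (intExpNeg m φ) =
      (⨆ (ν : Measure (En n)) (_ : MemP1 ν ∧ HasCompactSupportMeasure ν),
        (eInt ν (fun x => -φ x) - relEnt ν m)) ∧
    (SymmFun φ → SymmMeas m →
      elog (intExpNeg m φ) =
        (⨆ (ν : Measure (En n)) (_ : MemP1 ν ∧ HasCompactSupportMeasure ν ∧ SymmMeas ν),
          (eInt ν (fun x => -φ x) - relEnt ν m))) ∧
    (UncondFun φ → UncondMeas m →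
      elog (intExpNeg m φ) =
        (⨆ (ν : Measure (En n)) (_ : MemP1 ν ∧ HasCompactSupportMeasure ν ∧ UncondMeas ν),
          (eInt ν (fun x => -φ x) - relEnt ν m))) := by
  have hupper : ∀ ν : Measure (En n), MemP1 ν →
      eInt ν (fun x => -φ x) - relEnt ν m ≤ elog (intExpNeg m φ) :=
    fun ν hν => upper_bound hint hφ ν hν
  have hub : ∀ P : Measure (En n) → Prop, (∀ ν, P ν → MemP1 ν) →
      (⨆ (ν : Measure (En n)) (_ : P ν), (eInt ν (fun x => -φ x) - relEnt ν m))
        ≤ elog (intExpNeg m φ) :=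
    fun P hP => iSup_le fun ν => iSup_le fun hν => hupper ν (hP ν hν)
  refine ⟨le_antisymm ?_ (hub _ fun ν h => h), le_antisymm ?_ (hub _ fun ν h => h.1),
    fun hφs hms => le_antisymm ?_ (hub _ fun ν h => h.1),
    fun hφu hmu => le_antisymm ?_ (hub _ fun ν h => h.1)⟩
  · exact lower_bound hφ _ fun R hR => nuR_memP1 hφ R hR
  · exact lower_bound hφ _ fun R hR => ⟨nuR_memP1 hφ R hR, nuR_compactSupport hφ R⟩
  · exact lower_bound hφ _ fun R hR =>
      ⟨nuR_memP1 hφ R hR, nuR_compactSupport hφ R, nuR_symm hφ R hφs hms⟩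
  · exact lower_bound hφ _ fun R hR =>
      ⟨nuR_memP1 hφ R hR, nuR_compactSupport hφ R, nuR_uncond hφ R hφu hmu⟩

end
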